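/- For p = -1 and a ∈ (-4, 0), the two positive roots α > β > 0 of aκ⁴ + 4κ² - 1 satisfy α²β² = -1/a and α² + β² = -4/a; consequently 4m/(α³√(-a)) = 4m·β/α² for any m, and the energy formula Θ_{-1}(γ) = (2m/√(-a)) ∫_{β²}^{α²} du/(u√((α²-u)(u-β²)u)) equals 4m(β/α²)·Π(ζ², ζ) with ζ = √(α²-β²)/α. -/

import Mathlib

/-- Complete elliptic integral of the third kind (Legendre normal form). -/
noncomputable def ellPi (χ ζ : ℝ) : ℝ :=
  ∫ u in (0 : ℝ)..1, 1 / ((1 - χ * u ^ 2) * Real.sqrt ((1 - u ^ 2) * (1 - ζ ^ 2 * u ^ 2)))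

set_option maxHeartbeats 1000000 in
/-- For p = -1 and a ∈ (-4, 0), the positive roots α > β > 0 of aκ⁴ + 4κ² - 1 satisfy
the Vieta relations α²β² = -1/a and α² + β² = -4/a, so 4m/(α³√(-a)) = 4mβ/α², and the
energy integral (2m/√(-a))∫_{β²}^{α²} du/(u√((α²-u)(u-β²)u)) equals 4m(β/α²)Π(ζ², ζ)
with ζ = √(α²-β²)/α. -/
theorem stmt18 (a α β : ℝ) (ha : a ∈ Set.Ioo (-4 : ℝ) 0)
    (hβ : 0 < β) (hβα : β < α)
    (hα : a * α ^ 4 + 4 * α ^ 2 - 1 = 0) (hβroot : a * β ^ 4 + 4 * β ^ 2 - 1 = 0) :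
    α ^ 2 * β ^ 2 = -1 / a ∧
    α ^ 2 + β ^ 2 = -4 / a ∧
    (∀ m : ℝ, 4 * m / (α ^ 3 * Real.sqrt (-a)) = 4 * m * β / α ^ 2) ∧
    ∀ m : ℝ,
      (2 * m / Real.sqrt (-a)) *
          ∫ u in (β ^ 2)..(α ^ 2), 1 / (u * Real.sqrt ((α ^ 2 - u) * (u - β ^ 2) * u)) =
        4 * m * (β / α ^ 2) *
          ellPi ((Real.sqrt (α ^ 2 - β ^ 2) / α) ^ 2) (Real.sqrt (α ^ 2 - β ^ 2) / α) := by
  obtain ⟨ha1, ha2⟩ := ha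
  have hα0 : (0 : ℝ) < α := hβ.trans hβα
  have hane : a ≠ 0 := ne_of_lt ha2
  have hne : α ^ 2 - β ^ 2 ≠ 0 := by nlinarith
  have hsum' : a * (α ^ 2 + β ^ 2) + 4 = 0 := by
    have h1 : (α ^ 2 - β ^ 2) * (a * (α ^ 2 + β ^ 2) + 4) = 0 := by
      linear_combination hα - hβroot
    rcases mul_eq_zero.1 h1 with h | h
    · exact absurd h hne
    · exact h
  have hsum : α ^ 2 + β ^ 2 = -4 / a := by
    field_simp
    linarith [hsum']
  have hprod' : a * (α ^ 2 * β ^ 2) = -1 := by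
    linear_combination α ^ 2 * hsum' - hα
  have hprod : α ^ 2 * β ^ 2 = -1 / a := by
    field_simp
    linarith [hprod']
  have hab : Real.sqrt (-a) = 1 / (α * β) := by
    have h : -a = (1 / (α * β)) ^ 2 := by
      have hαβ : (α * β) ^ 2 ≠ 0 := by positivity
      field_simp
      nlinarith [hprod']
    rw [h, Real.sqrt_sq (by positivity)]
  refine ⟨hprod, hsum, ?_, ?_⟩
  · intro m
    rw [hab]
    field_simp
  · intro m
    set c : ℝ := α ^ 2 - β ^ 2 with hc_def
    have hc : 0 < c := by nlinarith
    set ζ : ℝ := Real.sqrt c / α with hζ_def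
    have hζ2 : ζ ^ 2 = c / α ^ 2 := by
      rw [hζ_def, div_pow, Real.sq_sqrt hc.le]
    set f : ℝ → ℝ := fun t => α ^ 2 - c * t ^ 2 with hf_def
    set g : ℝ → ℝ := fun u => 1 / (u * Real.sqrt ((α ^ 2 - u) * (u - β ^ 2) * u)) with hg_def
    set P : ℝ → ℝ := fun t =>
      1 / ((1 - ζ ^ 2 * t ^ 2) * Real.sqrt ((1 - t ^ 2) * (1 - ζ ^ 2 * t ^ 2))) with hP_def
    -- image of (0,1) under f
    have himg : f '' Set.Ioo 0 1 = Set.Ioo (β ^ 2) (α ^ 2) := by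
      ext u
      constructor
      · rintro ⟨t, ⟨ht0, ht1⟩, rfl⟩
        have ht2 : t ^ 2 < 1 := by nlinarith
        have hct : c * t ^ 2 < c * 1 := by
          exact mul_lt_mul_of_pos_left ht2 hc
        have hct0 : 0 < c * t ^ 2 := by positivity
        constructor
        · show β ^ 2 < α ^ 2 - c * t ^ 2
          linarith [hct, hc_def]
        · show α ^ 2 - c * t ^ 2 < α ^ 2
          linarith
      · rintro ⟨hu1, hu2⟩
        have hnum : 0 < (α ^ 2 - u) / c := div_pos (by linarith) hc
        refine ⟨Real.sqrt ((α ^ 2 - u) / c), ⟨?_, ?_⟩, ?_⟩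
        · exact Real.sqrt_pos.2 hnum
        · have h2 : (α ^ 2 - u) / c < 1 := by
            rw [div_lt_one hc, hc_def]
            linarith
          have h3 : Real.sqrt ((α ^ 2 - u) / c) < Real.sqrt 1 :=
            Real.sqrt_lt_sqrt hnum.le h2
          simpa using h3
        · show α ^ 2 - c * Real.sqrt ((α ^ 2 - u) / c) ^ 2 = u
          rw [Real.sq_sqrt hnum.le]
          field_simp
          ring
    have hderiv : ∀ t ∈ Set.Ioo (0 : ℝ) 1,
        HasDerivWithinAt f (-(2 * c * t)) (Set.Ioo 0 1) t := by
      intro t _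
      have h : HasDerivAt f (-(2 * c * t)) t := by
        have h1 : HasDerivAt (fun t : ℝ => α ^ 2 - c * t ^ 2) (-(c * (2 * t ^ 1))) t :=
          ((hasDerivAt_pow 2 t).const_mul c).const_sub (α ^ 2)
        convert h1 using 1
        ring
      exact h.hasDerivWithinAt
    have hinj : Set.InjOn f (Set.Ioo 0 1) := by
      intro x hx y hy h
      simp only [hf_def] at h
      have h2 : c * x ^ 2 = c * y ^ 2 := by linarith
      have h3 : x ^ 2 = y ^ 2 := mul_left_cancel₀ hc.ne' h2
      nlinarith [hx.1, hy.1]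
    have hcov := MeasureTheory.integral_image_eq_integral_abs_deriv_smul
      measurableSet_Ioo hderiv hinj g
    rw [himg] at hcov
    -- pointwise identity on (0,1)
    have hpt : ∀ t ∈ Set.Ioo (0 : ℝ) 1,
        |(-(2 * c * t))| • g (f t) = (2 / α ^ 3) * P t := by
      intro t ⟨ht0, ht1⟩
      have hF : f t = α ^ 2 - c * t ^ 2 := rfl
      have ht2 : t ^ 2 < 1 := by nlinarith
      have hct : c * t ^ 2 < c * 1 := mul_lt_mul_of_pos_left ht2 hc
      have hct0 : 0 < c * t ^ 2 := by positivity
      have hFβ : β ^ 2 < f t := by rw [hF]; linarith [hct, hc_def]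
      have hF0 : 0 < f t := by nlinarith
      have h1t : 0 < 1 - t ^ 2 := by nlinarith
      have hzt : 1 - ζ ^ 2 * t ^ 2 = f t / α ^ 2 := by
        rw [hζ2, hF]; field_simp
      have hS : (0 : ℝ) < Real.sqrt ((1 - t ^ 2) * f t) :=
        Real.sqrt_pos.2 (by positivity)
      have hsqrt1 : Real.sqrt ((α ^ 2 - f t) * (f t - β ^ 2) * f t)
          = (c * t) * Real.sqrt ((1 - t ^ 2) * f t) := by
        have hA : (α ^ 2 - f t) * (f t - β ^ 2) * f t
            = (c * t) ^ 2 * ((1 - t ^ 2) * f t) := by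
          rw [hF]; ring
        rw [hA, Real.sqrt_mul (sq_nonneg _), Real.sqrt_sq (by positivity)]
      have hsqrt2 : Real.sqrt ((1 - t ^ 2) * (1 - ζ ^ 2 * t ^ 2))
          = Real.sqrt ((1 - t ^ 2) * f t) / α := by
        have hB : (1 - t ^ 2) * (1 - ζ ^ 2 * t ^ 2)
            = (1 / α) ^ 2 * ((1 - t ^ 2) * f t) := by
          rw [hzt]; field_simp
        rw [hB, Real.sqrt_mul (sq_nonneg _), Real.sqrt_sq (by positivity)]
        field_simp
      have habs : |(-(2 * c * t))| = 2 * c * t := by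
        rw [abs_neg, abs_of_pos (by positivity)]
      rw [smul_eq_mul, habs, hg_def, hP_def]
      simp only
      rw [hsqrt1, hsqrt2, hzt]
      field_simp
    -- assemble the integral identity
    have hIoo1 : (∫ u in (β ^ 2)..(α ^ 2), g u) = ∫ u in Set.Ioo (β ^ 2) (α ^ 2), g u := by
      rw [intervalIntegral.integral_of_le (by nlinarith), MeasureTheory.integral_Ioc_eq_integral_Ioo]
    have hIoo2 : ellPi (ζ ^ 2) ζ = ∫ t in Set.Ioo (0 : ℝ) 1, P t := by
      rw [ellPi, intervalIntegral.integral_of_le (by norm_num),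
        MeasureTheory.integral_Ioc_eq_integral_Ioo]
    have hkey : (∫ u in (β ^ 2)..(α ^ 2), g u) = (2 / α ^ 3) * ellPi (ζ ^ 2) ζ := by
      rw [hIoo1, hcov, MeasureTheory.setIntegral_congr_fun measurableSet_Ioo hpt, hIoo2,
        MeasureTheory.integral_const_mul]
    have hζswap : Real.sqrt (α ^ 2 - β ^ 2) / α = ζ := rfl
    calc (2 * m / Real.sqrt (-a)) * ∫ u in (β ^ 2)..(α ^ 2), g u
        = (2 * m / (1 / (α * β))) * ((2 / α ^ 3) * ellPi (ζ ^ 2) ζ) := by rw [hab, hkey]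
      _ = 4 * m * (β / α ^ 2) * ellPi (ζ ^ 2) ζ := by field_simp; ring
      _ = 4 * m * (β / α ^ 2) *
          ellPi ((Real.sqrt (α ^ 2 - β ^ 2) / α) ^ 2) (Real.sqrt (α ^ 2 - β ^ 2) / α) := by
          rw [hζswap]
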